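/- Let θ ∈ ℝ^{d×n} and b ∈ ℝ^n, and define the retrieval map F : ℝ^d → ℝ^d by F(c) = θ(I + θᵀθ)⁻¹(θᵀc + b). Then there exists a constant k with 0 ≤ k < 1 such that ‖F(c) − F(c')‖ ≤ k‖c − c'‖ for all c, c' ∈ ℝ^d; equivalently, the operator norm of the symmetric matrix θ(I + θᵀθ)⁻¹θᵀ is strictly less than 1. -/

import Mathlib

open Matrix

section Aux

variable {d m : ℕ} (θ : Matrix (Fin d) (Fin m) ℝ)

private lemma pcn_dot_self_nonneg {n : ℕ} (v : Fin n → ℝ) : 0 ≤ v ⬝ᵥ v :=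
  Finset.sum_nonneg fun i _ => mul_self_nonneg (v i)

private lemma pcn_posdef : (1 + θᵀ * θ).PosDef := by
  have h := Matrix.posSemidef_conjTranspose_mul_self θ
  rw [Matrix.conjTranspose_eq_transpose_of_trivial] at h
  exact Matrix.PosDef.add_posSemidef Matrix.PosDef.one h

private lemma pcn_posdef' : (1 + θ * θᵀ).PosDef := by
  have h := Matrix.posSemidef_self_mul_conjTranspose θ
  rw [Matrix.conjTranspose_eq_transpose_of_trivial] at h
  exact Matrix.PosDef.add_posSemidef Matrix.PosDef.one h

private lemma pcn_push :
    θ * (1 + θᵀ * θ)⁻¹ * θᵀ = 1 - (1 + θ * θᵀ)⁻¹ := by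
  have hBd : IsUnit (1 + θᵀ * θ).det :=
    (Matrix.isUnit_iff_isUnit_det _).1 (pcn_posdef θ).isUnit
  have hAd : IsUnit (1 + θ * θᵀ).det :=
    (Matrix.isUnit_iff_isUnit_det _).1 (pcn_posdef' θ).isUnit
  have hswap : (1 + θ * θᵀ) * θ = θ * (1 + θᵀ * θ) := by
    simp [Matrix.add_mul, Matrix.mul_add, Matrix.mul_assoc]
  have hpush : θ * (1 + θᵀ * θ)⁻¹ = (1 + θ * θᵀ)⁻¹ * θ := by
    have h := congrArg (fun X => (1 + θ * θᵀ)⁻¹ * X * (1 + θᵀ * θ)⁻¹) hswap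
    simp only [← Matrix.mul_assoc] at h
    rw [Matrix.nonsing_inv_mul _ hAd, Matrix.one_mul] at h
    rw [h, Matrix.mul_assoc ((1 + θ * θᵀ)⁻¹ * θ) _ _,
      Matrix.mul_nonsing_inv _ hBd, Matrix.mul_one]
  rw [hpush, Matrix.mul_assoc]
  have h2 : θ * θᵀ = (1 + θ * θᵀ) - 1 := by rw [add_sub_cancel_left]
  nth_rewrite 2 [h2]
  rw [Matrix.mul_sub, Matrix.nonsing_inv_mul _ hAd, Matrix.mul_one]

private lemma pcn_key {x : Fin d → ℝ} (hx : x ≠ 0) :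
    ((θ * (1 + θᵀ * θ)⁻¹ * θᵀ) *ᵥ x) ⬝ᵥ ((θ * (1 + θᵀ * θ)⁻¹ * θᵀ) *ᵥ x)
      < x ⬝ᵥ x := by
  have hAd : IsUnit (1 + θ * θᵀ).det :=
    (Matrix.isUnit_iff_isUnit_det _).1 (pcn_posdef' θ).isUnit
  set y : Fin d → ℝ := (1 + θ * θᵀ)⁻¹ *ᵥ x with hy
  have hxy : x = (1 + θ * θᵀ) *ᵥ y := by
    rw [hy, Matrix.mulVec_mulVec, Matrix.mul_nonsing_inv _ hAd, Matrix.one_mulVec]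
  have hyne : y ≠ 0 := by
    intro h
    apply hx
    rw [hxy, h, Matrix.mulVec_zero]
  have hMx : (θ * (1 + θᵀ * θ)⁻¹ * θᵀ) *ᵥ x = x - y := by
    rw [pcn_push, Matrix.sub_mulVec, Matrix.one_mulVec, hy]
  rw [hMx]
  have hyy : 0 < y ⬝ᵥ y := by
    rcases lt_or_eq_of_le (pcn_dot_self_nonneg y) with h | h
    · exact h
    · exact absurd (dotProduct_self_eq_zero.mp h.symm) hyne
  have hAy : 0 ≤ (θᵀ *ᵥ y) ⬝ᵥ (θᵀ *ᵥ y) := pcn_dot_self_nonneg _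
  have hxyd : x ⬝ᵥ y = y ⬝ᵥ y + (θᵀ *ᵥ y) ⬝ᵥ (θᵀ *ᵥ y) := by
    rw [hxy, Matrix.add_mulVec, Matrix.one_mulVec, add_dotProduct]
    congr 1
    rw [← Matrix.mulVec_mulVec, dotProduct_comm, Matrix.dotProduct_mulVec,
      ← Matrix.mulVec_transpose, dotProduct_comm]
  have expand : (x - y) ⬝ᵥ (x - y) = x ⬝ᵥ x - 2 * (x ⬝ᵥ y) + y ⬝ᵥ y := by
    rw [sub_dotProduct, dotProduct_sub, dotProduct_sub,
      dotProduct_comm y x]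
    ring
  rw [expand, hxyd]
  nlinarith [hyy, hAy]

end Aux

set_option maxHeartbeats 1000000 in
/-- For `θ ∈ ℝ^{d×n}`, `b ∈ ℝ^n`, and the retrieval map
`F(c) = θ(I + θᵀθ)⁻¹(θᵀc + b)`, there exists a constant `0 ≤ k < 1` such that
`‖F(c) − F(c')‖ ≤ k‖c − c'‖` for all `c, c' ∈ ℝ^d` (Euclidean norms written via
`Real.sqrt` of sums of squares); equivalently, the operator norm of the symmetric
matrix `θ(I + θᵀθ)⁻¹θᵀ` (as a map between Euclidean spaces) is strictly less than 1. -/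
theorem pcn_retrieval_map_contraction
    (d m : ℕ) (θ : Matrix (Fin d) (Fin m) ℝ) (b : Fin m → ℝ)
    (F : (Fin d → ℝ) → (Fin d → ℝ))
    (hF : ∀ c : Fin d → ℝ, F c = θ.mulVec ((1 + θᵀ * θ)⁻¹.mulVec (θᵀ.mulVec c + b))) :
    (∃ k : ℝ, 0 ≤ k ∧ k < 1 ∧ ∀ c c' : Fin d → ℝ,
      Real.sqrt (∑ i, (F c i - F c' i) ^ 2) ≤ k * Real.sqrt (∑ i, (c i - c' i) ^ 2))
    ∧ ‖LinearMap.toContinuousLinearMap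
        (Matrix.toEuclideanLin (θ * (1 + θᵀ * θ)⁻¹ * θᵀ))‖ < 1 := by
  set M : Matrix (Fin d) (Fin d) ℝ := θ * (1 + θᵀ * θ)⁻¹ * θᵀ with hM
  set T := LinearMap.toContinuousLinearMap (Matrix.toEuclideanLin M) with hT
  have hTapp : ∀ x : EuclideanSpace ℝ (Fin d),
      T x = (WithLp.equiv 2 (Fin d → ℝ)).symm (M *ᵥ (WithLp.equiv 2 (Fin d → ℝ) x)) := by
    intro x
    rw [hT, LinearMap.coe_toContinuousLinearMap', Matrix.toEuclideanLin_apply]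
    rfl
  have hnorm : ∀ v : Fin d → ℝ,
      ‖(WithLp.equiv 2 (Fin d → ℝ)).symm v‖ = Real.sqrt (∑ i, (v i) ^ 2) := by
    intro v
    rw [EuclideanSpace.norm_eq]
    congr 1
    refine Finset.sum_congr rfl fun i _ => ?_
    rw [Real.norm_eq_abs, sq_abs]
    rfl
  have hsq : ∀ v : Fin d → ℝ,
      ‖(WithLp.equiv 2 (Fin d → ℝ)).symm v‖ ^ 2 = v ⬝ᵥ v := by
    intro v
    rw [hnorm, Real.sq_sqrt (by positivity)]
    simp [dotProduct, sq]
  have hkey : ∀ x : EuclideanSpace ℝ (Fin d), x ≠ 0 → ‖T x‖ < ‖x‖ := by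
    intro x hx
    have hx' : (WithLp.equiv 2 (Fin d → ℝ)) x ≠ 0 := by
      intro h
      apply hx
      have := congrArg (WithLp.equiv 2 (Fin d → ℝ)).symm h
      simpa using this
    refine lt_of_pow_lt_pow_left₀ 2 (norm_nonneg x) ?_
    have h := pcn_key θ hx'
    rw [← hsq, ← hsq, ← hTapp] at h
    simpa using h
  -- maximize ‖T x‖ over the closed unit ball
  obtain ⟨z, hz, hzmax⟩ :=
    (isCompact_closedBall (0 : EuclideanSpace ℝ (Fin d)) 1).exists_isMaxOn
      ⟨0, Metric.mem_closedBall_self zero_le_one⟩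
      (T.continuous.norm.continuousOn)
  set k := ‖T z‖ with hk
  have hk0 : 0 ≤ k := norm_nonneg _
  have hk1 : k < 1 := by
    rcases eq_or_ne z 0 with h | h
    · simp [hk, h]
    · calc k < ‖z‖ := hkey z h
        _ ≤ 1 := by simpa [Metric.mem_closedBall, dist_zero_right] using hz
  have hbound : ∀ x : EuclideanSpace ℝ (Fin d), ‖T x‖ ≤ k * ‖x‖ := by
    intro x
    rcases eq_or_ne x 0 with h | h
    · simp [h]
    · have hxpos : 0 < ‖x‖ := norm_pos_iff.mpr h
      have hmem : (‖x‖⁻¹ • x) ∈ Metric.closedBall (0 : EuclideanSpace ℝ (Fin d)) 1 := by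
        simp [Metric.mem_closedBall, dist_zero_right, norm_smul,
          abs_of_pos (inv_pos.mpr hxpos), inv_mul_cancel₀ hxpos.ne']
      have h2 : ‖T (‖x‖⁻¹ • x)‖ ≤ k := hzmax hmem
      rw [_root_.map_smul, norm_smul, Real.norm_eq_abs, abs_of_pos (inv_pos.mpr hxpos)] at h2
      calc ‖T x‖ = ‖x‖ * (‖x‖⁻¹ * ‖T x‖) := by
            field_simp
        _ ≤ ‖x‖ * k := by
            exact mul_le_mul_of_nonneg_left h2 (le_of_lt hxpos)
        _ = k * ‖x‖ := mul_comm _ _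
  constructor
  · refine ⟨k, hk0, hk1, fun c c' => ?_⟩
    have hdiff : F c - F c' = M *ᵥ (c - c') := by
      rw [hF, hF, hM]
      rw [← Matrix.mulVec_sub]
      rw [← Matrix.mulVec_sub]
      have : (θᵀ *ᵥ c + b) - (θᵀ *ᵥ c' + b) = θᵀ *ᵥ (c - c') := by
        rw [Matrix.mulVec_sub]; abel
      rw [this, ← Matrix.mulVec_mulVec, ← Matrix.mulVec_mulVec]
    have hFi : ∀ i, F c i - F c' i = (M *ᵥ (c - c')) i := by
      intro i
      have := congrFun hdiff i
      simpa using this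
    have hc : ∀ i, c i - c' i = (c - c') i := fun i => rfl
    calc Real.sqrt (∑ i, (F c i - F c' i) ^ 2)
        = ‖(WithLp.equiv 2 (Fin d → ℝ)).symm (M *ᵥ (c - c'))‖ := by
          rw [hnorm]
          congr 1
          exact Finset.sum_congr rfl fun i _ => by rw [hFi]
      _ = ‖T ((WithLp.equiv 2 (Fin d → ℝ)).symm (c - c'))‖ := by rw [hTapp]; rfl
      _ ≤ k * ‖(WithLp.equiv 2 (Fin d → ℝ)).symm (c - c')‖ := hbound _
      _ = k * Real.sqrt (∑ i, (c i - c' i) ^ 2) := by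
          rw [hnorm]; rfl
  · exact lt_of_le_of_lt (T.opNorm_le_bound hk0 hbound) hk1
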